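/- Let S² = {v ∈ ℝ³ : ‖v‖ = 1} be the unit sphere. The map sending a pair (P, Q) to ((P + Q)/‖P + Q‖, Q − P) is a bijection from the set {(P, Q) ∈ S² × S² : Q ≠ −P} of non-antipodal pairs of points of S² onto the set {(x, u) ∈ ℝ³ × ℝ³ : ‖x‖ = 1, ⟨x, u⟩ = 0, ‖u‖ < 2} of tangent vectors to S² of length less than 2. -/

import Mathlib

private lemma aux_norm_add_sq (P Q : EuclideanSpace ℝ (Fin 3)) (hP : ‖P‖ = 1) (hQ : ‖Q‖ = 1) :
    ‖P + Q‖ ^ 2 = 2 + 2 * inner ℝ P Q := by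
  rw [@norm_add_sq_real, hP, hQ]; ring

private lemma aux_norm_sub_sq (P Q : EuclideanSpace ℝ (Fin 3)) (hP : ‖P‖ = 1) (hQ : ‖Q‖ = 1) :
    ‖Q - P‖ ^ 2 = 2 - 2 * inner ℝ P Q := by
  rw [@norm_sub_sq_real, hP, hQ, real_inner_comm]; ring

/-- The map `(P, Q) ↦ ((P + Q)/‖P + Q‖, Q - P)` is a bijection from the set of
non-antipodal pairs of points of the unit sphere `S² ⊆ ℝ³` onto the set of tangent vectors
to `S²` of length less than `2`. -/
theorem sphere_pairs_to_tangent_vectors_bijective :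
    Set.BijOn
      (fun PQ : EuclideanSpace ℝ (Fin 3) × EuclideanSpace ℝ (Fin 3) =>
        (‖PQ.1 + PQ.2‖⁻¹ • (PQ.1 + PQ.2), PQ.2 - PQ.1))
      {PQ : EuclideanSpace ℝ (Fin 3) × EuclideanSpace ℝ (Fin 3) |
        ‖PQ.1‖ = 1 ∧ ‖PQ.2‖ = 1 ∧ PQ.2 ≠ -PQ.1}
      {xu : EuclideanSpace ℝ (Fin 3) × EuclideanSpace ℝ (Fin 3) |
        ‖xu.1‖ = 1 ∧ inner ℝ xu.1 xu.2 = (0:ℝ) ∧ ‖xu.2‖ < 2} := by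
  constructor
  · -- MapsTo
    rintro ⟨P, Q⟩ ⟨hP, hQ, hne⟩
    have hPQ : P + Q ≠ 0 := fun h => hne (eq_neg_of_add_eq_zero_right h)
    have hnPQ : (0:ℝ) < ‖P + Q‖ := norm_pos_iff.mpr hPQ
    have h1 : ‖‖P + Q‖⁻¹ • (P + Q)‖ = 1 := by
      rw [norm_smul, norm_inv, norm_norm, inv_mul_cancel₀ hnPQ.ne']
    have h2 : inner ℝ (‖P + Q‖⁻¹ • (P + Q)) (Q - P) = (0:ℝ) := by
      rw [real_inner_smul_left, inner_sub_right, inner_add_left, inner_add_left,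
        real_inner_self_eq_norm_sq, real_inner_self_eq_norm_sq, hP, hQ, real_inner_comm Q P]
      ring
    have h3 : ‖Q - P‖ < 2 := by
      have hs : ‖P + Q‖ ^ 2 > 0 := by positivity
      rw [aux_norm_add_sq P Q hP hQ] at hs
      have : ‖Q - P‖ ^ 2 < 2 ^ 2 := by rw [aux_norm_sub_sq P Q hP hQ]; nlinarith
      nlinarith [norm_nonneg (Q - P)]
    exact ⟨h1, h2, h3⟩
  constructor
  · -- InjOn
    rintro ⟨P, Q⟩ ⟨hP, hQ, hne⟩ ⟨P', Q'⟩ ⟨hP', hQ', hne'⟩ h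
    simp only [Prod.mk.injEq] at h
    obtain ⟨h1, h2⟩ := h
    have hPQ : P + Q ≠ 0 := fun h => hne (eq_neg_of_add_eq_zero_right h)
    have hPQ' : P' + Q' ≠ 0 := fun h => hne' (eq_neg_of_add_eq_zero_right h)
    have hn : (0:ℝ) < ‖P + Q‖ := norm_pos_iff.mpr hPQ
    have hn' : (0:ℝ) < ‖P' + Q'‖ := norm_pos_iff.mpr hPQ'
    have hnorm : ‖P + Q‖ = ‖P' + Q'‖ := by
      have e1 : ‖P + Q‖ ^ 2 = 4 - ‖Q - P‖ ^ 2 := by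
        rw [aux_norm_add_sq P Q hP hQ, aux_norm_sub_sq P Q hP hQ]; ring
      have e2 : ‖P' + Q'‖ ^ 2 = 4 - ‖Q' - P'‖ ^ 2 := by
        rw [aux_norm_add_sq P' Q' hP' hQ', aux_norm_sub_sq P' Q' hP' hQ']; ring
      rw [h2] at e1
      nlinarith
    have hsum : P + Q = P' + Q' := by
      have := congrArg (fun v => ‖P + Q‖ • v) h1
      simpa [smul_smul, mul_inv_cancel₀ hn.ne', hnorm, mul_inv_cancel₀ hn'.ne'] using this
    have hQQ : Q = Q' := by
      have h2Q : (2:ℝ) • Q = (2:ℝ) • Q' := by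
        have h3 := congrArg₂ (· + ·) hsum h2
        linear_combination (norm := module) h3
      exact smul_right_injective _ (by norm_num : (2:ℝ) ≠ 0) h2Q
    have hPP : P = P' := by
      rw [hQQ] at hsum
      exact add_right_cancel hsum
    exact Prod.ext hPP hQQ
  · -- SurjOn
    rintro ⟨x, u⟩ ⟨hx, hxu, hu⟩
    set t := Real.sqrt (1 - ‖u‖ ^ 2 / 4) with ht
    have hu2 : ‖u‖ ^ 2 < 4 := by nlinarith [norm_nonneg u]
    have htpos : (0:ℝ) < t := Real.sqrt_pos.mpr (by linarith)
    have ht2 : t ^ 2 = 1 - ‖u‖ ^ 2 / 4 := Real.sq_sqrt (by linarith)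
    refine ⟨(t • x - (2:ℝ)⁻¹ • u, t • x + (2:ℝ)⁻¹ • u), ⟨?_, ?_, ?_⟩, ?_⟩
    · have : ‖t • x - (2:ℝ)⁻¹ • u‖ ^ 2 = 1 := by
        rw [@norm_sub_sq_real, norm_smul, norm_smul, real_inner_smul_left,
          real_inner_smul_right, hxu]
        simp [hx]
        nlinarith
      nlinarith [norm_nonneg (t • x - (2:ℝ)⁻¹ • u)]
    · have : ‖t • x + (2:ℝ)⁻¹ • u‖ ^ 2 = 1 := by
        rw [@norm_add_sq_real, norm_smul, norm_smul, real_inner_smul_left,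
          real_inner_smul_right, hxu]
        simp [hx]
        nlinarith
      nlinarith [norm_nonneg (t • x + (2:ℝ)⁻¹ • u)]
    · intro h
      simp only at h
      have hxne : x ≠ 0 := by intro h0; rw [h0] at hx; simp at hx
      have hz : (2 * t) • x = 0 := by
        linear_combination (norm := module) h
      rcases smul_eq_zero.mp hz with h' | h'
      · nlinarith
      · exact hxne h'
    · have hsum : (t • x - (2:ℝ)⁻¹ • u) + (t • x + (2:ℝ)⁻¹ • u) = (2 * t) • x := by
        rw [two_mul, add_smul]; abel
      have hnsum : ‖(t • x - (2:ℝ)⁻¹ • u) + (t • x + (2:ℝ)⁻¹ • u)‖ = 2 * t := by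
        rw [hsum, norm_smul, hx]
        simp [abs_of_pos, htpos, mul_pos two_pos htpos, le_of_lt htpos]
      simp only [Prod.mk.injEq]
      constructor
      · rw [hnsum, hsum, smul_smul, inv_mul_cancel₀ (by positivity : (2*t:ℝ) ≠ 0), one_smul]
      · module
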